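/- Let f : ℝⁿ → ℝ be differentiable with coordinate-wise L-Lipschitz continuous gradient and μ₁-strongly convex with respect to the 1-norm (μ₁ > 0), with minimizer x*. If x^{k+1} = x^k − (1/L)∇_{i_k}f(x^k)e_{i_k} where i_k is chosen by the Gauss-Southwell rule i_k ∈ argmax_i |∇ᵢf(x^k)|, then f(x^{k+1}) − f(x*) ≤ (1 − μ₁/L)(f(x^k) − f(x*)). -/

import Mathlib

open scoped RealInnerProductSpace

/-- Coordinate descent lemma: one exact-step coordinate update decreases `f`
by at least `(∂ᵢf)²/(2L)`. -/
lemma coord_descent_step {n : ℕ}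
    (f : EuclideanSpace ℝ (Fin n) → ℝ)
    (f' : EuclideanSpace ℝ (Fin n) → EuclideanSpace ℝ (Fin n))
    (hf : ∀ x, HasGradientAt f (f' x) x)
    (L : ℝ) (hL : 0 < L)
    (hlip : ∀ (x : EuclideanSpace ℝ (Fin n)) (α : ℝ) (i : Fin n),
      |f' (x + α • EuclideanSpace.single i 1) i - f' x i| ≤ L * |α|)
    (x : EuclideanSpace ℝ (Fin n)) (i : Fin n) :
    f (x - ((1 / L) * f' x i) • EuclideanSpace.single i 1)
      ≤ f x - (f' x i) ^ 2 / (2 * L) := by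
  set E : EuclideanSpace ℝ (Fin n) := EuclideanSpace.single i 1 with hE
  set g : ℝ := f' x i with hg
  -- derivative of t ↦ f (x + t • E)
  have hψ : ∀ t : ℝ, HasDerivAt (fun s : ℝ => f (x + s • E)) (f' (x + t • E) i) t := by
    intro t
    have h1 : HasDerivAt (fun s : ℝ => x + s • E) E t := by
      simpa using ((hasDerivAt_id t).smul_const E).const_add x
    have h2 : HasFDerivAt f (InnerProductSpace.toDual ℝ _ (f' (x + t • E))) (x + t • E) :=
      (hasGradientAt_iff_hasFDerivAt).1 (hf (x + t • E))
    have h3 := h2.comp_hasDerivAt t h1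
    have h4 : (InnerProductSpace.toDual ℝ _ (f' (x + t • E))) E = f' (x + t • E) i := by
      rw [InnerProductSpace.toDual_apply_apply, hE, EuclideanSpace.inner_single_right]
      simp
    rw [h4] at h3
    exact h3
  -- quadratic upper bound
  have key : ∀ t : ℝ, f (x + t • E) ≤ f x + g * t + L / 2 * t ^ 2 := by
    intro t
    set χ : ℝ → ℝ := fun s => f x + g * s + L / 2 * s ^ 2 - f (x + s • E) with hχdef
    have hχ : ∀ s : ℝ, HasDerivAt χ (g + L * s - f' (x + s • E) i) s := by
      intro s
      have hpoly : HasDerivAt (fun u : ℝ => f x + g * u + L / 2 * u ^ 2) (g + L * s) s := by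
        have h1 : HasDerivAt (fun u : ℝ => g * u) g s := by
          simpa using (hasDerivAt_id s).const_mul g
        have h2 : HasDerivAt (fun u : ℝ => L / 2 * u ^ 2) (L / 2 * (2 * s)) s := by
          simpa using (hasDerivAt_pow 2 s).const_mul (L / 2)
        have := ((hasDerivAt_const s (f x)).add h1).add h2
        refine this.congr_deriv ?_
        ring
      exact hpoly.sub (hψ s)
    have hχdiff : Differentiable ℝ χ := fun s => (hχ s).differentiableAt
    have hderiv : ∀ s : ℝ, deriv χ s = g + L * s - f' (x + s • E) i := fun s => (hχ s).deriv
    have hχ0 : χ 0 = 0 := by simp [hχdef]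
    have hχt : 0 ≤ χ t := by
      rcases le_total 0 t with ht | ht
      · have hmono : MonotoneOn χ (Set.Ici (0 : ℝ)) := by
          apply monotoneOn_of_deriv_nonneg (convex_Ici 0) hχdiff.continuous.continuousOn
            hχdiff.differentiableOn
          intro s hs
          rw [interior_Ici] at hs
          have hs0 : (0 : ℝ) < s := hs
          have := hlip x s i
          rw [hderiv s]
          have habs : |s| = s := abs_of_pos hs0
          rw [habs] at this
          have := abs_le.1 this
          linarith [this.2]
        have := hmono (Set.self_mem_Ici) (Set.mem_Ici.2 ht) ht
        linarith [hχ0 ▸ this]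
      · have hanti : AntitoneOn χ (Set.Iic (0 : ℝ)) := by
          apply antitoneOn_of_deriv_nonpos (convex_Iic 0) hχdiff.continuous.continuousOn
            hχdiff.differentiableOn
          intro s hs
          rw [interior_Iic] at hs
          have hs0 : s < (0 : ℝ) := hs
          have := hlip x s i
          rw [hderiv s]
          have habs : |s| = -s := abs_of_neg hs0
          rw [habs] at this
          have := abs_le.1 this
          linarith [this.1]
        have := hanti (Set.mem_Iic.2 ht) (Set.self_mem_Iic) ht
        linarith [hχ0 ▸ this]
    have : f x + g * t + L / 2 * t ^ 2 - f (x + t • E) ≥ 0 := hχt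
    linarith
  -- specialize at t = -(1/L)*g
  have hstep : x - ((1 / L) * g) • E = x + (-((1 / L) * g)) • E := by
    rw [neg_smul, sub_eq_add_neg]
  have := key (-((1 / L) * g))
  rw [← hstep] at this
  have hL' : L ≠ 0 := ne_of_gt hL
  calc f (x - ((1 / L) * g) • E) ≤ f x + g * (-((1 / L) * g)) + L / 2 * (-((1 / L) * g)) ^ 2 :=
        this
    _ = f x - g ^ 2 / (2 * L) := by field_simp; ring

/-- refined convergence rate of the Gauss-Southwell rule under
`μ₁`-strong convexity in the 1-norm. -/
theorem gauss_southwell_rate_one_norm {n : ℕ}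
    (f : EuclideanSpace ℝ (Fin n) → ℝ)
    (f' : EuclideanSpace ℝ (Fin n) → EuclideanSpace ℝ (Fin n))
    (hf : ∀ x, HasGradientAt f (f' x) x)
    (L : ℝ) (hL : 0 < L)
    (hlip : ∀ (x : EuclideanSpace ℝ (Fin n)) (α : ℝ) (i : Fin n),
      |f' (x + α • EuclideanSpace.single i 1) i - f' x i| ≤ L * |α|)
    (μ₁ : ℝ) (hμ₁ : 0 < μ₁)
    (hsc : ∀ x y, f y ≥ f x + ⟪f' x, y - x⟫ + μ₁ / 2 * (∑ i, |y i - x i|) ^ 2)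
    (xs : EuclideanSpace ℝ (Fin n)) (hxs : ∀ y, f xs ≤ f y)
    (xk : EuclideanSpace ℝ (Fin n)) (ik : Fin n)
    (hik : ∀ j, |f' xk j| ≤ |f' xk ik|)
    (xk1 : EuclideanSpace ℝ (Fin n))
    (hstep : xk1 = xk - ((1 / L) * f' xk ik) • EuclideanSpace.single ik 1) :
    f xk1 - f xs ≤ (1 - μ₁ / L) * (f xk - f xs) := by
  set g : ℝ := f' xk ik with hg
  set G : ℝ := |g| with hG
  set S : ℝ := ∑ i, |xs i - xk i| with hS
  -- descent
  have hdesc : f xk1 ≤ f xk - g ^ 2 / (2 * L) := by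
    rw [hstep]
    exact coord_descent_step f f' hf L hL hlip xk ik
  -- strong convexity bound on suboptimality
  have hs := hsc xk xs
  have hinner : ⟪f' xk, xs - xk⟫ ≥ -G * S := by
    have h1 : ⟪f' xk, xs - xk⟫ = ∑ i, f' xk i * (xs i - xk i) := by
      simp [PiLp.inner_apply]
      exact Finset.sum_congr rfl fun i _ => mul_comm _ _
    rw [h1, hS, neg_mul, Finset.mul_sum, ← Finset.sum_neg_distrib]
    apply Finset.sum_le_sum
    intro i _
    have h2 : |f' xk i * (xs i - xk i)| ≤ G * |xs i - xk i| := by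
      rw [abs_mul]
      exact mul_le_mul_of_nonneg_right (hik i) (abs_nonneg _)
    have := neg_abs_le (f' xk i * (xs i - xk i))
    linarith
  have hSnonneg : 0 ≤ S := Finset.sum_nonneg fun i _ => abs_nonneg _
  have hquad : -G * S + μ₁ / 2 * S ^ 2 ≥ -(g ^ 2 / (2 * μ₁)) := by
    rw [ge_iff_le, ← sub_nonneg]
    have hGg : G ^ 2 = g ^ 2 := sq_abs g
    have h := sq_nonneg (μ₁ * S - G)
    have : -G * S + μ₁ / 2 * S ^ 2 + g ^ 2 / (2 * μ₁) = (μ₁ * S - G) ^ 2 / (2 * μ₁) := by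
      field_simp
      nlinarith [hGg]
    rw [show -G * S + μ₁ / 2 * S ^ 2 - -(g ^ 2 / (2 * μ₁))
        = -G * S + μ₁ / 2 * S ^ 2 + g ^ 2 / (2 * μ₁) by ring, this]
    positivity
  have h5 : f xk - f xs ≤ g ^ 2 / (2 * μ₁) := by linarith
  have hg2 : 2 * μ₁ * (f xk - f xs) ≤ g ^ 2 := by
    have := mul_le_mul_of_nonneg_left h5 (le_of_lt (by positivity : (0:ℝ) < 2 * μ₁))
    calc 2 * μ₁ * (f xk - f xs) ≤ 2 * μ₁ * (g ^ 2 / (2 * μ₁)) := this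
      _ = g ^ 2 := by field_simp
  have hΔ : 0 ≤ f xk - f xs := sub_nonneg.2 (hxs xk)
  have hdesc' : 2 * L * f xk1 + g ^ 2 ≤ 2 * L * f xk := by
    have h1 : f xk1 + g ^ 2 / (2 * L) ≤ f xk := by linarith
    have := mul_le_mul_of_nonneg_left h1 (le_of_lt (by positivity : (0:ℝ) < 2 * L))
    have h2 : 2 * L * (f xk1 + g ^ 2 / (2 * L)) = 2 * L * f xk1 + g ^ 2 := by field_simp
    linarith [h2 ▸ this]
  have hrw : (1 - μ₁ / L) * (f xk - f xs) = ((L - μ₁) * (f xk - f xs)) / L := by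
    field_simp
  rw [hrw, le_div_iff₀ hL]
  nlinarith [hdesc', hg2, hΔ]
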